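/- In the setting of Lemma 'lem-X-s': let $(X_1,\dots,X_N)$ be an admissible $T_N$-configuration in $\mathbb{M}^{(m+nm)\times(n+1)}$ with data $P = \begin{bmatrix}\tilde{A} & \tilde{a} \\ (\tilde{B}^i) & (\tilde{b}^i)\end{bmatrix}$, rank-one matrices $C_j = \begin{bmatrix} p_j\otimes\alpha_j & s_jp_j \\ (\beta_j^i\otimes\alpha_j) & (s_j\beta_j^i)\end{bmatrix}$, and $\kappa_j>1$. For $s\ne 0$ define $\tilde{P} = \begin{bmatrix}\tilde{A} & 0 \\ (0) & (\tilde{b}^i)\end{bmatrix}$ and $C_j^s = \begin{bmatrix} p_j\otimes\alpha_j & ss_jp_j \\ \frac{1}{s}(\beta_j^i\otimes\alpha_j) & (s_j\beta_j^i)\end{bmatrix}$. Then $(\tilde{X}_1^s,\dots,\tilde{X}_N^s)$ defined by $\tilde{X}_j^s = \tilde{P} + C_1^s + \dots + C_{j-1}^s + \kappa_j C_j^s$ is again an admissible $T_N$-configuration, and the diagonal projection satisfies $\mathbb{P}(T(\tilde{X}_1^s,\dots,\tilde{X}_N^s)) = \mathbb{P}(T(X_1,\dots,X_N))$; moreover if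 $X_j\in\mathcal{K}$ then $\tilde{X}_j^s\in\mathcal{K}$. -/

import Mathlib

/-- The block-matrix space `𝕄^{(m+nm)×(n+1)}`: rows indexed by `Fin m ⊕ (Fin m × Fin n)`,
columns by `Fin n ⊕ Unit`. -/
abbrev BM (m n : ℕ) := Matrix (Fin m ⊕ (Fin m × Fin n)) (Fin n ⊕ Unit) ℝ

/-- The block matrix `[A a; (Bⁱ) (bⁱ)]`. -/
def blk {m n : ℕ} (A : Matrix (Fin m) (Fin n) ℝ) (a : Fin m → ℝ)
    (B : Fin m → Matrix (Fin n) (Fin n) ℝ) (b : Fin m → Fin n → ℝ) : BM m n :=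
  Matrix.of fun r c =>
    match r, c with
    | Sum.inl i, Sum.inl k => A i k
    | Sum.inl i, Sum.inr _ => a i
    | Sum.inr p, Sum.inl k => B p.1 p.2 k
    | Sum.inr p, Sum.inr _ => b p.1 p.2

/-- The spatial-gradient block `A` of a block matrix. -/
def Ablock {m n : ℕ} (X : BM m n) : Matrix (Fin m) (Fin n) ℝ :=
  Matrix.of fun i k => X (Sum.inl i) (Sum.inl k)

/-- The set `𝒦 = {[A a; (Bⁱ) (σⁱ(A))] : tr Bⁱ = 0}` associated to a flux `σ`. -/
def Kset {m n : ℕ} (σ : Matrix (Fin m) (Fin n) ℝ → Matrix (Fin m) (Fin n) ℝ) :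
    Set (BM m n) :=
  {X | (∀ i j, X (Sum.inr (i, j)) (Sum.inr ()) = σ (Ablock X) i j) ∧
    ∀ i, ∑ j, X (Sum.inr (i, j)) (Sum.inl j) = 0}

/-- The "diagonal" projection `ℙ([A a; (Bⁱ) (bⁱ)]) = [A, (bⁱ)]`. -/
def Pproj {m n : ℕ} (X : BM m n) :
    Matrix (Fin m) (Fin n) ℝ × (Fin m → Fin n → ℝ) :=
  (Ablock X, fun i j => X (Sum.inr (i, j)) (Sum.inr ()))

/-- Rescaling in the time variable: from an admissible `T_N`-configuration
`(X_1, …, X_N)` in `𝒦` with data `P, C_j, κ_j`, the rescaled configuration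
`(X̃_1ˢ, …, X̃_Nˢ)` with data `P̃, C_jˢ, κ_j` is again an admissible
`T_N`-configuration, has the same diagonal projection of its T-set,
and stays in `𝒦`. -/
lemma rank_vecMulVec_one {ι κ : Type*} [Fintype ι] [Fintype κ] [DecidableEq κ] [DecidableEq ι]
    (u : ι → ℝ) (v : κ → ℝ) (hu : u ≠ 0) (hv : v ≠ 0) :
    Matrix.rank (Matrix.vecMulVec u v) = 1 := by
  have hmv : ∀ x, (Matrix.vecMulVec u v).mulVecLin x = (dotProduct v x) • u := by
    intro x
    ext i
    simp only [Matrix.mulVecLin_apply, Matrix.mulVec, Matrix.vecMulVec_apply,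
      dotProduct, Pi.smul_apply, smul_eq_mul, Finset.sum_mul]
    apply Finset.sum_congr rfl
    intro k _
    ring
  have hrange : LinearMap.range (Matrix.vecMulVec u v).mulVecLin = Submodule.span ℝ {u} := by
    apply le_antisymm
    · rintro y ⟨x, rfl⟩
      rw [hmv]
      exact Submodule.smul_mem _ _ (Submodule.mem_span_singleton_self u)
    · rw [Submodule.span_singleton_le_iff_mem]
      obtain ⟨k, hk⟩ : ∃ k, v k ≠ 0 := by
        by_contra h; push_neg at h; exact hv (funext h)
      refine ⟨fun j => if j = k then (v k)⁻¹ else 0, ?_⟩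
      rw [hmv]
      have : dotProduct v (fun j => if j = k then (v k)⁻¹ else 0) = 1 := by
        simp only [dotProduct, mul_ite, mul_zero]
        rw [Finset.sum_eq_single k]
        · field_simp
          simp
        · intro b _ hb; simp [hb]
        · simp
      rw [this, one_smul]
  rw [Matrix.rank, hrange, finrank_span_singleton hu]

theorem stmt12 {m n N : ℕ}
    (σ : Matrix (Fin m) (Fin n) ℝ → Matrix (Fin m) (Fin n) ℝ)
    (Atil : Matrix (Fin m) (Fin n) ℝ) (atil : Fin m → ℝ)
    (Btil : Fin m → Matrix (Fin n) (Fin n) ℝ) (btil : Fin m → Fin n → ℝ)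
    (P : BM m n) (hP : P = blk Atil atil Btil btil)
    (p : Fin N → Fin m → ℝ) (α : Fin N → Fin n → ℝ) (s' : Fin N → ℝ)
    (β : Fin N → Fin m → Fin n → ℝ)
    (C : Fin N → BM m n)
    (hCform : ∀ j, C j = blk (Matrix.vecMulVec (p j) (α j))
      (fun i => s' j * p j i)
      (fun i => Matrix.vecMulVec (β j i) (α j))
      (fun i k => s' j * β j i k))
    (κ : Fin N → ℝ) (hκ : ∀ j, 1 < κ j)
    (hC : ∀ j, Matrix.rank (C j) = 1) (hsum : ∑ j, C j = 0)
    -- admissibility of the `C_j`: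
    (hadm : ∀ j, α j ≠ 0 ∧ ∀ i, ∑ k, β j i k * α j k = 0)
    (X Pm : Fin N → BM m n)
    (hPm : ∀ j, Pm j = P + ∑ i ∈ Finset.univ.filter (fun i => i < j), C i)
    (hX : ∀ j, X j = Pm j + κ j • C j)
    (s : ℝ) (hs : s ≠ 0)
    (Ptil : BM m n) (hPtil : Ptil = blk Atil 0 0 btil)
    (Cs : Fin N → BM m n)
    (hCs : ∀ j, Cs j = blk (Matrix.vecMulVec (p j) (α j))
      (fun i => s * s' j * p j i)
      (fun i => (1 / s) • Matrix.vecMulVec (β j i) (α j))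
      (fun i k => s' j * β j i k))
    (Xs Pms : Fin N → BM m n)
    (hPms : ∀ j, Pms j = Ptil + ∑ i ∈ Finset.univ.filter (fun i => i < j), Cs i)
    (hXs : ∀ j, Xs j = Pms j + κ j • Cs j) :
    -- `(X̃_1ˢ, …, X̃_Nˢ)` is an admissible `T_N`-configuration:
    ((∀ j, Matrix.rank (Cs j) = 1) ∧ ∑ j, Cs j = 0 ∧
      (∀ j, α j ≠ 0 ∧ ∀ i, ∑ k, β j i k * α j k = 0)) ∧
    -- same projected T-set:
    Pproj '' (⋃ j, openSegment ℝ (Xs j) (Pms j)) =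
      Pproj '' (⋃ j, openSegment ℝ (X j) (Pm j)) ∧
    -- membership in `𝒦` is preserved:
    (∀ j, X j ∈ Kset σ → Xs j ∈ Kset σ) := by
  -- rank-one representations
  have hC' : ∀ j, C j = Matrix.vecMulVec
      (Sum.elim (p j) (fun q => β j q.1 q.2)) (Sum.elim (α j) (fun _ => s' j)) := by
    intro j
    rw [hCform j]
    ext r c
    rcases r with i | q <;> rcases c with k | u <;>
      simp [blk, Matrix.vecMulVec_apply, mul_comm]
  have hCs' : ∀ j, Cs j = Matrix.vecMulVec
      (Sum.elim (p j) (fun q => (1/s) * β j q.1 q.2))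
      (Sum.elim (α j) (fun _ => s * s' j)) := by
    intro j
    rw [hCs j]
    ext r c
    rcases r with i | q <;> rcases c with k | u
    · simp [blk, Matrix.vecMulVec_apply]
    · simp only [blk, Matrix.of_apply, Matrix.vecMulVec_apply, Sum.elim_inl, Sum.elim_inr]
      ring
    · simp only [blk, Matrix.of_apply, Matrix.vecMulVec_apply, Sum.elim_inl, Sum.elim_inr,
        Matrix.smul_apply, smul_eq_mul]
      ring
    · simp only [blk, Matrix.of_apply, Matrix.vecMulVec_apply, Sum.elim_inl, Sum.elim_inr]
      field_simp
  -- rank of Cs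
  have hrank : ∀ j, Matrix.rank (Cs j) = 1 := by
    intro j
    have hC0 : C j ≠ 0 := by
      intro h
      have := hC j
      rw [h, Matrix.rank_zero] at this
      exact zero_ne_one this
    have hu0 : Sum.elim (p j) (fun q : Fin m × Fin n => β j q.1 q.2) ≠ 0 := by
      intro h
      apply hC0
      rw [hC' j, h]
      ext r c
      simp [Matrix.vecMulVec_apply]
    have hu : Sum.elim (p j) (fun q : Fin m × Fin n => (1/s) * β j q.1 q.2) ≠ 0 := by
      intro h
      apply hu0
      funext r
      rcases r with i | q
      · have := congrFun h (Sum.inl i); simpa using this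
      · have := congrFun h (Sum.inr q)
        simp only [Sum.elim_inr, Pi.zero_apply] at this
        rcases mul_eq_zero.mp this with h1 | h2
        · exact absurd h1 (one_div_ne_zero hs)
        · simpa using h2
    have hv : Sum.elim (α j) (fun _ : Unit => s * s' j) ≠ 0 := by
      intro h
      apply (hadm j).1
      funext k
      have := congrFun h (Sum.inl k)
      simpa using this
    rw [hCs' j]
    exact rank_vecMulVec_one _ _ hu hv
  -- sum zero
  have hCe : ∀ r c, ∑ j, C j r c = 0 := by
    intro r c
    have : (∑ j, C j) r c = (0 : BM m n) r c := by rw [hsum]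
    rw [Matrix.sum_apply] at this
    simpa using this
  have hsum' : ∑ j, Cs j = 0 := by
    ext r c
    rw [Matrix.sum_apply]
    rcases r with i | q <;> rcases c with k | u
    · have h := hCe (Sum.inl i) (Sum.inl k)
      simp only [hCform, blk, Matrix.of_apply] at h
      simp only [hCs, blk, Matrix.of_apply, Matrix.zero_apply]
      exact h
    · have h := hCe (Sum.inl i) (Sum.inr u)
      simp only [hCform, blk, Matrix.of_apply] at h
      simp only [hCs, blk, Matrix.of_apply, Matrix.zero_apply, mul_assoc]
      rw [← Finset.mul_sum, h, mul_zero]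
    · have h := hCe (Sum.inr q) (Sum.inl k)
      simp only [hCform, blk, Matrix.of_apply] at h
      simp only [hCs, blk, Matrix.of_apply, Matrix.zero_apply, Matrix.smul_apply,
        smul_eq_mul]
      rw [← Finset.mul_sum, h, mul_zero]
    · have h := hCe (Sum.inr q) (Sum.inr u)
      simp only [hCform, blk, Matrix.of_apply] at h
      simp only [hCs, blk, Matrix.of_apply, Matrix.zero_apply]
      exact h
  -- projection equalities
  have hPp : ∀ j, Pproj (Pms j) = Pproj (Pm j) := by
    intro j
    rw [hPms j, hPm j, hP, hPtil]
    unfold Pproj Ablock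
    refine Prod.ext ?_ ?_
    · ext i k
      simp only [Matrix.of_apply, Matrix.add_apply, Matrix.sum_apply, hCs, hCform, blk]
    · funext i k
      simp only [Matrix.add_apply, Matrix.sum_apply, hCs, hCform, blk, Matrix.of_apply]
  have hPx : ∀ j, Pproj (Xs j) = Pproj (X j) := by
    intro j
    rw [hXs j, hX j, hPms j, hPm j, hP, hPtil]
    unfold Pproj Ablock
    refine Prod.ext ?_ ?_
    · ext i k
      simp only [Matrix.of_apply, Matrix.add_apply, Matrix.sum_apply, Matrix.smul_apply,
        hCs, hCform, blk, smul_eq_mul]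
    · funext i k
      simp only [Matrix.add_apply, Matrix.sum_apply, Matrix.smul_apply,
        hCs, hCform, blk, Matrix.of_apply, smul_eq_mul]
  have hlin : ∀ (a b : ℝ) (Y Z : BM m n),
      Pproj (a • Y + b • Z) = a • Pproj Y + b • Pproj Z := by
    intro a b Y Z
    unfold Pproj Ablock
    refine Prod.ext ?_ ?_
    · ext i k
      simp [Matrix.add_apply, Matrix.smul_apply]
    · funext i k
      simp [Matrix.add_apply, Matrix.smul_apply]
  refine ⟨⟨hrank, hsum', hadm⟩, ?_, ?_⟩
  · -- image equality
    apply Set.ext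
    intro y
    simp only [Set.mem_image, Set.mem_iUnion]
    constructor
    · rintro ⟨x, ⟨j, hx⟩, rfl⟩
      obtain ⟨a, b, ha, hb, hab, rfl⟩ := hx
      exact ⟨a • X j + b • Pm j, ⟨j, a, b, ha, hb, hab, rfl⟩,
        by rw [hlin, hlin, hPx j, hPp j]⟩
    · rintro ⟨x, ⟨j, hx⟩, rfl⟩
      obtain ⟨a, b, ha, hb, hab, rfl⟩ := hx
      exact ⟨a • Xs j + b • Pms j, ⟨j, a, b, ha, hb, hab, rfl⟩,
        by rw [hlin, hlin, hPx j, hPp j]⟩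
  · -- Kset
    intro j hK
    have h1 : Ablock (Xs j) = Ablock (X j) := congrArg Prod.fst (hPx j)
    have h2 : (fun i k => Xs j (Sum.inr (i, k)) (Sum.inr ())) =
        (fun i k => X j (Sum.inr (i, k)) (Sum.inr ())) := congrArg Prod.snd (hPx j)
    constructor
    · intro i k
      have e := congrFun (congrFun h2 i) k
      rw [e, h1]
      exact hK.1 i k
    · intro i
      have hz : ∀ l, ∑ k, ((1:ℝ)/s) * (β l i k * α l k) = 0 := by
        intro l
        rw [← Finset.mul_sum, (hadm l).2 i, mul_zero]
      have hent : ∀ k : Fin n, Xs j (Sum.inr (i, k)) (Sum.inl k) =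
          (∑ l ∈ Finset.univ.filter (fun l => l < j), (1/s) * (β l i k * α l k)) +
          κ j * ((1/s) * (β j i k * α j k)) := by
        intro k
        rw [hXs j, hPms j, hPtil]
        simp only [Matrix.add_apply, Matrix.sum_apply, Matrix.smul_apply, hCs, blk,
          Matrix.of_apply, Pi.zero_apply, Matrix.zero_apply, smul_eq_mul,
          Matrix.vecMulVec_apply, zero_add]
      rw [Finset.sum_congr rfl (fun k _ => hent k), Finset.sum_add_distrib,
        Finset.sum_comm, ← Finset.mul_sum, hz j, mul_zero, add_zero]
      rw [Finset.sum_eq_zero]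
      intro l _
      exact hz l
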